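/- Assume S(A) = A Q_m Aᵀ is positive definite with orthonormal eigenvectors u₁,…,uₙ and eigenvalues λ₁,…,λₙ > 0, and let 𝒳 = 𝒳_d ∩ ℋ be nonempty. Define b_j = min{ ‖w‖₂ / (2√λ_j), ψ_ℋ(u_j) }, where ψ_ℋ(v) = h_ℋ(v) + h_ℋ(−v) and h_ℋ is the support function of ℋ. Then 𝒳 is contained in an orthogonal box with axes u₁,…,uₙ and side lengths b₁,…,bₙ, i.e., there exist reals c₁,…,cₙ such that every x ∈ 𝒳 satisfies c_j ≤ u_jᵀ x ≤ c_j + b_j for all j; consequently diam(𝒳) ≤ (Σⱼ b_j²)^{1/2}. -/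

import Mathlib

open Matrix
open scoped InnerProductSpace

noncomputable section

/-- Reinterpret a plain vector as a point of Euclidean space (with the ℓ² norm). -/
def toE {n : ℕ} (v : Fin n → ℝ) : EuclideanSpace ℝ (Fin n) := WithLp.toLp 2 v

/-- The all-ones m×m matrix 𝟙𝟙ᵀ. -/
def onesM (m : ℕ) : Matrix (Fin m) (Fin m) ℝ := Matrix.of fun _ _ => 1

/-- The centering projector Q_m = I_m − (1/m)𝟙𝟙ᵀ. -/
def Qm (m : ℕ) : Matrix (Fin m) (Fin m) ℝ := 1 - (m : ℝ)⁻¹ • onesM m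

/-- The i-th anchor a⁽ⁱ⁾, i.e. the i-th column of A, as a Euclidean point. -/
def colE {n m : ℕ} (A : Matrix (Fin n) (Fin m) ℝ) (i : Fin m) : EuclideanSpace ℝ (Fin n) :=
  toE fun k => A k i

/-- The vector ω ∈ ℝᵐ with entries ωᵢ = ‖a⁽ⁱ⁾‖₂². -/
def omegaV {n m : ℕ} (A : Matrix (Fin n) (Fin m) ℝ) : Fin m → ℝ := fun i => ‖colE A i‖ ^ 2

/-- The polyhedral localization set
𝒳_d = {x : ∃ α, ξ⁻ ≤ Q_m ω − 2 Q_m Aᵀ x + α𝟙 ≤ ξ⁺}. -/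
def Xd {n m : ℕ} (A : Matrix (Fin n) (Fin m) ℝ) (xim xip : Fin m → ℝ) :
    Set (EuclideanSpace ℝ (Fin n)) :=
  {x | ∃ α : ℝ,
      xim ≤ (Qm m).mulVec (omegaV A) - (2 : ℝ) • ((Qm m * Aᵀ).mulVec x) + α • (1 : Fin m → ℝ) ∧
      (Qm m).mulVec (omegaV A) - (2 : ℝ) • ((Qm m * Aᵀ).mulVec x) + α • (1 : Fin m → ℝ) ≤ xip}

/-- The intersection ℋ of the upper-range balls: ℋ = ∩ᵢ {x : ‖x − a⁽ⁱ⁾‖₂ ≤ √ξᵢ⁺}. -/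
def Hset {n m : ℕ} (A : Matrix (Fin n) (Fin m) ℝ) (xip : Fin m → ℝ) :
    Set (EuclideanSpace ℝ (Fin n)) :=
  {x | ∀ i, ‖x - colE A i‖ ≤ Real.sqrt (xip i)}

/-- Support function h_Ω(v) = sup_{x∈Ω} vᵀx. -/
def suppF {n : ℕ} (Ω : Set (EuclideanSpace ℝ (Fin n))) (v : EuclideanSpace ℝ (Fin n)) : ℝ :=
  sSup ((fun x => ⟪v, x⟫_ℝ) '' Ω)

/-- ψ_Ω(v) = h_Ω(v) + h_Ω(−v). -/
def psiH {n : ℕ} (Ω : Set (EuclideanSpace ℝ (Fin n))) (v : EuclideanSpace ℝ (Fin n)) : ℝ :=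
  suppF Ω v + suppF Ω (-v)

/-- Directional width width_v(Ω) = sup_{x∈Ω} vᵀx − inf_{x∈Ω} vᵀx. -/
def dwidth {n : ℕ} (v : EuclideanSpace ℝ (Fin n)) (Ω : Set (EuclideanSpace ℝ (Fin n))) : ℝ :=
  sSup ((fun x => ⟪v, x⟫_ℝ) '' Ω) - sInf ((fun x => ⟪v, x⟫_ℝ) '' Ω)

/-- The aggregated squared radius ρ(p)² = pᵀ(ξ⁺ − ω) + ‖Ap‖₂². -/
def rho2 {n m : ℕ} (A : Matrix (Fin n) (Fin m) ℝ) (xip : Fin m → ℝ) (p : Fin m → ℝ) : ℝ :=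
  p ⬝ᵥ (xip - omegaV A) + ‖toE (A.mulVec p)‖ ^ 2

lemma inner_toE {n : ℕ} (v w : Fin n → ℝ) : ⟪toE v, toE w⟫_ℝ = v ⬝ᵥ w := by
  simp [toE, PiLp.inner_apply, dotProduct, RCLike.inner_apply, mul_comm]

lemma normsq_toE {n : ℕ} (v : Fin n → ℝ) : ‖toE v‖ ^ 2 = v ⬝ᵥ v := by
  rw [← inner_toE]; exact (real_inner_self_eq_norm_sq _).symm

lemma QmT (m : ℕ) : (Qm m)ᵀ = Qm m := by
  simp [Qm, onesM, Matrix.transpose_sub, Matrix.transpose_smul]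
  ext i j; simp [Matrix.transpose_apply]

lemma onesM_mul_onesM (m : ℕ) : onesM m * onesM m = (m : ℝ) • onesM m := by
  ext i j; simp [onesM, Matrix.mul_apply]

lemma Qm_mul_Qm {m : ℕ} (hm : m ≠ 0) : Qm m * Qm m = Qm m := by
  unfold Qm
  have h : (m:ℝ)⁻¹ • ((m:ℝ)⁻¹ • ((m:ℝ) • onesM m)) = (m:ℝ)⁻¹ • onesM m := by
    rw [smul_smul, smul_smul]
    congr 1
    field_simp
  simp only [sub_mul, mul_sub, mul_one, one_mul, Matrix.mul_one, Matrix.smul_mul,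
    Matrix.mul_smul, onesM_mul_onesM, h]
  abel

lemma Qm_one {m : ℕ} (hm : m ≠ 0) : (Qm m).mulVec (1 : Fin m → ℝ) = 0 := by
  funext i
  simp [Qm, Matrix.sub_mulVec, Matrix.smul_mulVec, Matrix.mulVec, onesM, dotProduct,
    Matrix.one_apply, Finset.sum_ite_eq]
  field_simp
  norm_num

lemma norm_Qm_mulVec_le {m : ℕ} (hm : m ≠ 0) (v : Fin m → ℝ) :
    ‖toE ((Qm m).mulVec v)‖ ≤ ‖toE v‖ := by
  set a := (Qm m).mulVec v with ha
  have key : a ⬝ᵥ a = a ⬝ᵥ v := by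
    calc a ⬝ᵥ a = (a ᵥ* Qm m) ⬝ᵥ v := by rw [← Matrix.dotProduct_mulVec]
    _ = ((Qm m).mulVec a) ⬝ᵥ v := by rw [← QmT m, Matrix.vecMul_transpose, QmT]
    _ = ((Qm m * Qm m).mulVec v) ⬝ᵥ v := by rw [ha, Matrix.mulVec_mulVec]
    _ = a ⬝ᵥ v := by rw [Qm_mul_Qm hm]
  have h1 : ‖toE a‖ ^ 2 ≤ ‖toE a‖ * ‖toE v‖ := by
    rw [normsq_toE, key, ← inner_toE]
    exact real_inner_le_norm _ _
  rcases eq_or_lt_of_le (norm_nonneg (toE a)) with h | h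
  · rw [← h]; exact norm_nonneg _
  · nlinarith

lemma quad_lower {n m : ℕ} (A : Matrix (Fin n) (Fin m) ℝ)
    (hpd : (A * Qm m * Aᵀ).PosDef)
    (u : Fin n → EuclideanSpace ℝ (Fin n)) (lam : Fin n → ℝ)
    (horth : ∀ i j, ⟪u i, u j⟫_ℝ = if i = j then 1 else 0)
    (heig : ∀ j, toE ((A * Qm m * Aᵀ).mulVec (u j)) = lam j • u j)
    (j : Fin n) (d : Fin n → ℝ) :
    lam j * ((u j : Fin n → ℝ) ⬝ᵥ d) ^ 2 ≤ d ⬝ᵥ (A * Qm m * Aᵀ).mulVec d := by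
  set S := A * Qm m * Aᵀ with hSdef
  have hS : Sᵀ = S := by
    rw [hSdef, Matrix.transpose_mul, Matrix.transpose_mul, Matrix.transpose_transpose, QmT,
      Matrix.mul_assoc]
  set uu : Fin n → ℝ := (u j : Fin n → ℝ) with huu
  set q : ℝ := uu ⬝ᵥ d with hq
  set r : Fin n → ℝ := d - q • uu with hr
  have hdd : d = q • uu + r := by rw [hr]; abel
  have huuE : ∀ w : Fin n → ℝ, uu ⬝ᵥ w = ⟪u j, toE w⟫_ℝ := fun w => (inner_toE uu w).symm
  have huu1 : uu ⬝ᵥ uu = 1 := by rw [huuE]; exact (horth j j).trans (if_pos rfl)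
  have hSu : S.mulVec uu = lam j • uu := by
    have := congrArg WithLp.ofLp (heig j); simpa [toE] using this
  have hsym : ∀ v w : Fin n → ℝ, v ⬝ᵥ S.mulVec w = (S.mulVec v) ⬝ᵥ w := by
    intro v w
    rw [Matrix.dotProduct_mulVec, ← hS, Matrix.vecMul_transpose, hS]
  have hur : uu ⬝ᵥ r = 0 := by
    rw [hr, dotProduct_sub, dotProduct_smul, smul_eq_mul, huu1, mul_one, ← hq, sub_self]
  have huSr : uu ⬝ᵥ S.mulVec r = 0 := by
    rw [hsym, hSu, smul_dotProduct, smul_eq_mul, hur, mul_zero]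
  have hrSu : r ⬝ᵥ S.mulVec uu = 0 := by rw [hsym uu r] at huSr; rw [dotProduct_comm]; exact huSr
  have hrr : 0 ≤ r ⬝ᵥ S.mulVec r := by
    have := hpd.posSemidef.dotProduct_mulVec_nonneg r
    simpa using this
  have expand : d ⬝ᵥ S.mulVec d =
      q * (q * (uu ⬝ᵥ S.mulVec uu)) + q * (uu ⬝ᵥ S.mulVec r)
        + (q * (r ⬝ᵥ S.mulVec uu) + r ⬝ᵥ S.mulVec r) := by
    rw [hdd]
    simp [Matrix.mulVec_add, Matrix.mulVec_smul, dotProduct_add, add_dotProduct,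
      smul_dotProduct, dotProduct_smul, smul_eq_mul, mul_add, add_mul]
    ring
  have huSu : uu ⬝ᵥ S.mulVec uu = lam j := by
    rw [hSu, dotProduct_smul, smul_eq_mul, huu1, mul_one]
  rw [expand, huSu, huSr, hrSu]
  nlinarith

def Xd' {n m : ℕ} (A : Matrix (Fin n) (Fin m) ℝ) (xim xip : Fin m → ℝ) :
    Set (EuclideanSpace ℝ (Fin n)) :=
  {x | ∃ α : ℝ,
      xim ≤ (Qm m).mulVec (fun i => ‖toE fun k => A k i‖ ^ 2) - (2 : ℝ) • ((Qm m * Aᵀ).mulVec x) + α • (1 : Fin m → ℝ) ∧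
      (Qm m).mulVec (fun i => ‖toE fun k => A k i‖ ^ 2) - (2 : ℝ) • ((Qm m * Aᵀ).mulVec x) + α • (1 : Fin m → ℝ) ≤ xip}

lemma Xd_width {n m : ℕ} (hm : m ≠ 0) (A : Matrix (Fin n) (Fin m) ℝ) (xim xip : Fin m → ℝ)
    (u : Fin n → EuclideanSpace ℝ (Fin n)) (lam : Fin n → ℝ)
    (hpd : (A * Qm m * Aᵀ).PosDef)
    (horth : ∀ i j, ⟪u i, u j⟫_ℝ = if i = j then 1 else 0)
    (hlam : ∀ j, 0 < lam j)
    (heig : ∀ j, toE ((A * Qm m * Aᵀ).mulVec (u j)) = lam j • u j)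
    (j : Fin n) (x y : EuclideanSpace ℝ (Fin n))
    (hx : x ∈ Xd' A xim xip) (hy : y ∈ Xd' A xim xip) :
    ⟪u j, x⟫_ℝ - ⟪u j, y⟫_ℝ ≤ ‖toE (xip - xim)‖ / (2 * Real.sqrt (lam j)) := by
  obtain ⟨α, hα1, hα2⟩ := hx
  obtain ⟨β, hβ1, hβ2⟩ := hy
  set M := Qm m * Aᵀ with hM
  set ω : Fin m → ℝ := fun i => ‖toE fun k => A k i‖ ^ 2 with hω
  set z : Fin m → ℝ := (Qm m).mulVec ω - (2 : ℝ) • (M.mulVec x) + α • (1 : Fin m → ℝ) with hz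
  set z' : Fin m → ℝ := (Qm m).mulVec ω - (2 : ℝ) • (M.mulVec y) + β • (1 : Fin m → ℝ) with hz'
  set d : Fin n → ℝ := fun k => x k - y k with hd
  have hMd : M.mulVec x - M.mulVec y = M.mulVec d := by
    funext i
    simp [Matrix.mulVec, dotProduct, hd, mul_sub, Finset.sum_sub_distrib]
  have hzz' : z - z' = (-2 : ℝ) • M.mulVec d + (α - β) • (1 : Fin m → ℝ) := by
    rw [hz, hz', ← hMd]
    module
  have h3 : (Qm m).mulVec (z - z') = (-2 : ℝ) • M.mulVec d := by
    rw [hzz', Matrix.mulVec_add, Matrix.mulVec_smul, Matrix.mulVec_smul, Qm_one hm,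
      Matrix.mulVec_mulVec, hM, ← Matrix.mul_assoc, Qm_mul_Qm hm]
    simp
  have h2 : ‖toE (z - z')‖ ≤ ‖toE (xip - xim)‖ := by
    rw [EuclideanSpace.norm_eq, EuclideanSpace.norm_eq]
    apply Real.sqrt_le_sqrt
    apply Finset.sum_le_sum
    intro i _
    have e1 : xim i ≤ z i := hα1 i
    have e2 : z i ≤ xip i := hα2 i
    have e3 : xim i ≤ z' i := hβ1 i
    have e4 : z' i ≤ xip i := hβ2 i
    have habs : |z i - z' i| ≤ |xip i - xim i| := by
      have hnn : (0:ℝ) ≤ xip i - xim i := by linarith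
      rw [abs_of_nonneg hnn, abs_le]
      constructor <;> linarith
    have : ‖(z - z') i‖ ≤ ‖(xip - xim) i‖ := by
      simpa [Real.norm_eq_abs, Pi.sub_apply] using habs
    exact pow_le_pow_left₀ (norm_nonneg _) (by simpa [toE] using this) 2
  have h4 : ‖toE ((-2 : ℝ) • M.mulVec d)‖ ≤ ‖toE (xip - xim)‖ := by
    rw [← h3]
    exact (norm_Qm_mulVec_le hm _).trans h2
  have hsm : toE ((-2 : ℝ) • M.mulVec d) = (-2 : ℝ) • toE (M.mulVec d) := by simp [toE]
  rw [hsm, norm_smul] at h4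
  have hp : ‖toE (M.mulVec d)‖ ≤ ‖toE (xip - xim)‖ / 2 := by
    rw [le_div_iff₀ (by norm_num : (0:ℝ) < 2)]
    calc ‖toE (M.mulVec d)‖ * 2 = ‖(-2:ℝ)‖ * ‖toE (M.mulVec d)‖ := by
          rw [norm_neg]; simp [mul_comm]
    _ ≤ _ := h4
  set S := A * Qm m * Aᵀ with hSdef
  have h5 : d ⬝ᵥ S.mulVec d = ‖toE (M.mulVec d)‖ ^ 2 := by
    rw [normsq_toE]
    have hMT : Mᵀ = A * Qm m := by
      rw [hM, Matrix.transpose_mul, Matrix.transpose_transpose, QmT]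
    calc d ⬝ᵥ S.mulVec d = d ⬝ᵥ (Mᵀ * M).mulVec d := by
          rw [hMT, hM, hSdef, Matrix.mul_assoc, Matrix.mul_assoc, ← Matrix.mul_assoc (Qm m),
            Qm_mul_Qm hm]
    _ = d ⬝ᵥ Mᵀ.mulVec (M.mulVec d) := by rw [← Matrix.mulVec_mulVec]
    _ = (d ᵥ* Mᵀ) ⬝ᵥ M.mulVec d := by rw [Matrix.dotProduct_mulVec]
    _ = (M.mulVec d) ⬝ᵥ (M.mulVec d) := by rw [Matrix.vecMul_transpose]
  have h6 := quad_lower A hpd u lam horth heig j d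
  rw [h5] at h6
  set q : ℝ := (u j : Fin n → ℝ) ⬝ᵥ d with hqdef
  set W : ℝ := ‖toE (xip - xim)‖ with hW
  have hW0 : 0 ≤ W := norm_nonneg _
  have hq2 : lam j * q ^ 2 ≤ (W / 2) ^ 2 :=
    h6.trans (pow_le_pow_left₀ (norm_nonneg _) hp 2)
  set B : ℝ := W / (2 * Real.sqrt (lam j)) with hB
  have hsq : Real.sqrt (lam j) > 0 := Real.sqrt_pos.mpr (hlam j)
  have hB0 : 0 ≤ B := div_nonneg hW0 (by positivity)
  have hB2 : lam j * B ^ 2 = (W / 2) ^ 2 := by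
    rw [hB, div_pow, mul_pow, Real.sq_sqrt (hlam j).le]
    field_simp
    ring_nf
    rw [mul_comm (lam j) (W ^ 2), mul_assoc, mul_inv_cancel₀ (hlam j).ne', mul_one]
  have hq2B : q ^ 2 ≤ B ^ 2 := by
    have hl := hlam j
    nlinarith [hq2, hB2]
  have hqB : q ≤ B := by
    calc q ≤ |q| := le_abs_self q
    _ = Real.sqrt (q ^ 2) := (Real.sqrt_sq_eq_abs q).symm
    _ ≤ Real.sqrt (B ^ 2) := Real.sqrt_le_sqrt hq2B
    _ = B := by rw [Real.sqrt_sq hB0]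
  have hfin : ⟪u j, x⟫_ℝ - ⟪u j, y⟫_ℝ = q := by
    rw [hqdef, ← inner_toE]
    have : toE d = x - y := rfl
    rw [this, inner_sub_right]
    rfl
  rw [hfin]
  exact hqB

lemma Hset_inner_le_suppF {n m : ℕ} (hm : m ≠ 0) (A : Matrix (Fin n) (Fin m) ℝ)
    (xip : Fin m → ℝ) (v : EuclideanSpace ℝ (Fin n)) (x : EuclideanSpace ℝ (Fin n))
    (hx : x ∈ Hset A xip) : ⟪v, x⟫_ℝ ≤ suppF (Hset A xip) v := by
  apply le_csSup _ (Set.mem_image_of_mem _ hx)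
  set i0 : Fin m := ⟨0, Nat.pos_of_ne_zero hm⟩
  refine ⟨‖v‖ * (Real.sqrt (xip i0) + ‖colE A i0‖), ?_⟩
  rintro t ⟨y, hy, rfl⟩
  calc ⟪v, y⟫_ℝ ≤ ‖v‖ * ‖y‖ := real_inner_le_norm v y
  _ ≤ ‖v‖ * (Real.sqrt (xip i0) + ‖colE A i0‖) := by
      apply mul_le_mul_of_nonneg_left _ (norm_nonneg v)
      calc ‖y‖ = ‖(y - colE A i0) + colE A i0‖ := by rw [sub_add_cancel]
      _ ≤ ‖y - colE A i0‖ + ‖colE A i0‖ := norm_add_le _ _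
      _ ≤ Real.sqrt (xip i0) + ‖colE A i0‖ := by
          have := hy i0; linarith

lemma H_width {n m : ℕ} (hm : m ≠ 0) (A : Matrix (Fin n) (Fin m) ℝ) (xip : Fin m → ℝ)
    (v : EuclideanSpace ℝ (Fin n)) (x y : EuclideanSpace ℝ (Fin n))
    (hx : x ∈ Hset A xip) (hy : y ∈ Hset A xip) :
    ⟪v, x⟫_ℝ - ⟪v, y⟫_ℝ ≤ psiH (Hset A xip) v := by
  have h1 := Hset_inner_le_suppF hm A xip v x hx
  have h2 := Hset_inner_le_suppF hm A xip (-v) y hy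
  have h3 : ⟪-v, y⟫_ℝ = -⟪v, y⟫_ℝ := inner_neg_left _ _
  rw [psiH]
  linarith

lemma Xd_eq {n m : ℕ} (A : Matrix (Fin n) (Fin m) ℝ) (xim xip : Fin m → ℝ) :
    Xd A xim xip = Xd' A xim xip := rfl

/-- Let S(A) ≻ 0 with orthonormal eigenvectors u₁,…,uₙ and eigenvalues
λ₁,…,λₙ > 0, and let 𝒳 = 𝒳_d ∩ ℋ be nonempty. With
b_j = min{‖w‖₂/(2√λ_j), ψ_ℋ(u_j)}, the set 𝒳 is contained in an orthogonal box with axes u_j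
and side lengths b_j, and consequently diam(𝒳) ≤ (Σⱼ b_j²)^{1/2}. -/
theorem stmt15 {n m : ℕ} (A : Matrix (Fin n) (Fin m) ℝ) (xim xip : Fin m → ℝ)
    (hle : xim ≤ xip) (hxip : ∀ i, 0 ≤ xip i)
    (hpd : (A * Qm m * Aᵀ).PosDef)
    (u : Fin n → EuclideanSpace ℝ (Fin n)) (lam : Fin n → ℝ)
    (horth : ∀ i j, ⟪u i, u j⟫_ℝ = if i = j then 1 else 0)
    (hlam : ∀ j, 0 < lam j)
    (heig : ∀ j, toE ((A * Qm m * Aᵀ).mulVec (u j)) = lam j • u j)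
    (hne : (Xd A xim xip ∩ Hset A xip).Nonempty) :
    (∃ c : Fin n → ℝ, ∀ x ∈ Xd A xim xip ∩ Hset A xip, ∀ j,
        c j ≤ ⟪u j, x⟫_ℝ ∧ ⟪u j, x⟫_ℝ ≤ c j +
          min (‖toE (xip - xim)‖ / (2 * Real.sqrt (lam j))) (psiH (Hset A xip) (u j))) ∧
      EMetric.diam (Xd A xim xip ∩ Hset A xip) ≤
        ENNReal.ofReal (Real.sqrt (∑ j,
          (min (‖toE (xip - xim)‖ / (2 * Real.sqrt (lam j)))
            (psiH (Hset A xip) (u j))) ^ 2)) := by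
  set b : Fin n → ℝ := fun j =>
    min (‖toE (xip - xim)‖ / (2 * Real.sqrt (lam j))) (psiH (Hset A xip) (u j)) with hb
  rcases Nat.eq_zero_or_pos n with hn | hn
  · constructor
    · exact ⟨fun _ => 0, fun x _ j => absurd j.isLt (by omega)⟩
    · have hsub : (Xd A xim xip ∩ Hset A xip).Subsingleton := by
        intro x _ y _
        ext k
        exact absurd k.isLt (by omega)
      rw [show EMetric.diam (Xd A xim xip ∩ Hset A xip) = 0 from EMetric.diam_subsingleton hsub]
      exact bot_le
  · have hm : m ≠ 0 := by
      intro hm0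
      have hx0 : (toE (fun _ => (1:ℝ)) : EuclideanSpace ℝ (Fin n)) ≠ 0 := by
        intro h
        have h1 : (1:ℝ) = 0 := by
          simpa [toE] using congrArg (fun v : EuclideanSpace ℝ (Fin n) => v ⟨0, hn⟩) h
        norm_num at h1
      have hzero : A * Qm m * Aᵀ = 0 := by
        subst hm0
        ext i j'
        simp [Matrix.mul_apply]
      have := hpd.dotProduct_mulVec_pos (x := (toE (fun _ => (1:ℝ))).ofLp) (by simpa [toE] using hx0)
      rw [hzero] at this
      simp at this
    obtain ⟨x₀, hx₀⟩ := hne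
    have key : ∀ x ∈ Xd A xim xip ∩ Hset A xip, ∀ y ∈ Xd A xim xip ∩ Hset A xip, ∀ j,
        ⟪u j, x⟫_ℝ - ⟪u j, y⟫_ℝ ≤ b j := by
      intro x hx y hy j
      refine le_min ?_ ?_
      · exact Xd_width hm A xim xip u lam hpd horth hlam heig j x y
          ((Xd_eq A xim xip) ▸ hx.1) ((Xd_eq A xim xip) ▸ hy.1)
      · exact H_width hm A xip (u j) x y hx.2 hy.2
    constructor
    · refine ⟨fun j => sInf ((fun x => ⟪u j, x⟫_ℝ) '' (Xd A xim xip ∩ Hset A xip)), ?_⟩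
      intro x hx j
      have hbdd : BddBelow ((fun x => ⟪u j, x⟫_ℝ) '' (Xd A xim xip ∩ Hset A xip)) := by
        refine ⟨⟪u j, x₀⟫_ℝ - b j, ?_⟩
        rintro t ⟨y, hy, rfl⟩
        have := key x₀ hx₀ y hy j
        simp only []
        linarith
      constructor
      · exact csInf_le hbdd (Set.mem_image_of_mem _ hx)
      · have hge : ⟪u j, x⟫_ℝ - b j ≤
            sInf ((fun x => ⟪u j, x⟫_ℝ) '' (Xd A xim xip ∩ Hset A xip)) := by
          apply le_csInf (Set.Nonempty.image _ ⟨x₀, hx₀⟩)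
          rintro t ⟨y, hy, rfl⟩
          have := key x hx y hy j
          simp only []
          linarith
        linarith
    · have hON : Orthonormal ℝ u := by
        rw [orthonormal_iff_ite]; exact horth
      haveI : Nonempty (Fin n) := ⟨⟨0, hn⟩⟩
      have hcard : Fintype.card (Fin n) = Module.finrank ℝ (EuclideanSpace ℝ (Fin n)) := by simp
      let bas := basisOfLinearIndependentOfCardEqFinrank hON.linearIndependent hcard
      have hbas : ⇑bas = u := coe_basisOfLinearIndependentOfCardEqFinrank _ _
      let OB : OrthonormalBasis (Fin n) ℝ (EuclideanSpace ℝ (Fin n)) :=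
        OrthonormalBasis.mk hON (by rw [← hbas]; exact bas.span_eq.ge)
      have hOB : ∀ j, OB j = u j := fun j => by
        simp [OB, OrthonormalBasis.coe_mk]
      apply EMetric.diam_le
      intro x hx y hy
      rw [edist_dist]
      apply ENNReal.ofReal_le_ofReal
      rw [dist_eq_norm]
      have hnorm : ‖x - y‖ = Real.sqrt (∑ j, ⟪u j, x - y⟫_ℝ ^ 2) := by
        rw [← OB.repr.norm_map (x - y), EuclideanSpace.norm_eq]
        congr 1
        apply Finset.sum_congr rfl
        intro j _
        rw [OrthonormalBasis.repr_apply_apply, hOB, Real.norm_eq_abs, sq_abs]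
      rw [hnorm]
      apply Real.sqrt_le_sqrt
      apply Finset.sum_le_sum
      intro j _
      have k1 := key x hx y hy j
      have k2 := key y hy x hx j
      apply sq_le_sq'
      · rw [inner_sub_right]; linarith
      · rw [inner_sub_right]; linarith
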